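/- For natural numbers m, l with l ≤ m, the Gauss hypergeometric value ₂F₁(-l, -(m-l); 3/2; 1), defined as the (finite) sum ∑_{j=0}^{∞} ((-l)_j * (-(m-l))_j / (3/2)_j) * 1/j!, equals (1/C(m,l)) * (2m+1)! / ((2l+1)! * (2m-2l+1)!). -/

import Mathlib

open Finset

/-- The summand in factorial/binomial form. -/
noncomputable def tt (a b j : ℕ) : ℚ :=
  (a.choose j : ℚ) * (b.choose j : ℚ) * ((j.factorial : ℚ))^2 * 4^j / ((2*j+1).factorial : ℚ)

/-- The WZ certificate sequence. -/
noncomputable def gg (a b : ℕ) : ℕ → ℚ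
  | 0 => 0
  | (j+1) => -((a.choose j : ℚ) * (b.choose (j+1) : ℚ) * (((j+1).factorial : ℚ))^2 * 4^(j+1)
      / ((2*(j+1)).factorial : ℚ))

lemma choose_cast_succ (n k : ℕ) :
    ((k : ℚ) + 1) * (n.choose (k+1) : ℚ) = ((n : ℚ) - k) * (n.choose k : ℚ) := by
  rcases le_or_gt (k+1) n with h | h
  · have h' : k ≤ n := Nat.le_of_succ_le h
    have := Nat.choose_succ_right_eq n k
    have hcast : ((n.choose (k+1) * (k+1) : ℕ) : ℚ) = ((n.choose k * (n - k) : ℕ) : ℚ) := by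
      exact_mod_cast congrArg (Nat.cast (R := ℚ)) this
    push_cast [Nat.cast_sub h'] at hcast
    linarith
  · rcases Nat.lt_or_ge k n with hk | hk
    · omega
    · rcases Nat.eq_or_lt_of_le hk with rfl | hk'
      · simp [Nat.choose_eq_zero_of_lt (by omega : n < n+1)]
      · simp [Nat.choose_eq_zero_of_lt hk', Nat.choose_eq_zero_of_lt (by omega : n < k+1)]

lemma choose_cast_succ'' (n k : ℕ) :
    (n.choose (k+1) : ℚ) = ((n : ℚ) - k) * (n.choose k : ℚ) / ((k : ℚ) + 1) := by
  have h1 : ((k : ℚ) + 1) ≠ 0 := by positivity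
  field_simp
  linarith [choose_cast_succ n k]

lemma point_succ (a b j : ℕ) :
    (2*(a:ℚ)+3) * tt (a+1) b (j+1)
      = (2*(a:ℚ)+2*(b:ℚ)+3) * tt a b (j+1) + (gg a b (j+1+1) - gg a b (j+1)) := by
  have hg2 : gg a b (j+1+1)
      = -((a.choose (j+1) : ℚ) * (b.choose (j+1+1) : ℚ) * (((j+1+1).factorial : ℚ))^2 * 4^(j+1+1)
        / ((2*(j+1+1)).factorial : ℚ)) := rfl
  have hg1 : gg a b (j+1)
      = -((a.choose j : ℚ) * (b.choose (j+1) : ℚ) * (((j+1).factorial : ℚ))^2 * 4^(j+1)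
        / ((2*(j+1)).factorial : ℚ)) := rfl
  have hP : (((a+1).choose (j+1) : ℕ) : ℚ) = (a.choose j : ℚ) + (a.choose (j+1) : ℚ) := by
    rw [Nat.choose_succ_succ]; push_cast; ring
  have hp' : (a.choose (j+1) : ℚ) = ((a : ℚ) - j) * (a.choose j : ℚ) / ((j : ℚ) + 1) :=
    choose_cast_succ'' a j
  have hq'' : (b.choose (j+1+1) : ℚ)
      = ((b : ℚ) - (j+1)) * (b.choose (j+1) : ℚ) / (((j:ℚ)+1) + 1) := by
    have h := choose_cast_succ'' b (j+1)
    push_cast at h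
    exact h
  -- factorial cast expansions
  have f1 : (((j+1).factorial : ℕ) : ℚ) = ((j:ℚ)+1) * (j.factorial : ℚ) := by
    rw [Nat.factorial_succ]; push_cast; ring
  have f2 : (((j+1+1).factorial : ℕ) : ℚ) = ((j:ℚ)+2) * (((j:ℚ)+1) * (j.factorial : ℚ)) := by
    rw [Nat.factorial_succ, Nat.factorial_succ]; push_cast; ring
  have f3 : (((2*(j+1)+1).factorial : ℕ) : ℚ)
      = (2*(j:ℚ)+3) * ((2*(j:ℚ)+2) * ((2*j+1).factorial : ℚ)) := by
    have e : 2*(j+1)+1 = ((2*j+1)+1)+1 := by ring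
    rw [e, Nat.factorial_succ, Nat.factorial_succ]; push_cast; ring
  have f4 : (((2*(j+1)).factorial : ℕ) : ℚ) = (2*(j:ℚ)+2) * ((2*j+1).factorial : ℚ) := by
    have e : 2*(j+1) = (2*j+1)+1 := by ring
    rw [e, Nat.factorial_succ]; push_cast; ring
  have f5 : (((2*(j+1+1)).factorial : ℕ) : ℚ)
      = (2*(j:ℚ)+4) * ((2*(j:ℚ)+3) * ((2*(j:ℚ)+2) * ((2*j+1).factorial : ℚ))) := by
    have e : 2*(j+1+1) = (((2*j+1)+1)+1)+1 := by ring
    rw [e, Nat.factorial_succ, Nat.factorial_succ, Nat.factorial_succ]; push_cast; ring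
  rw [hg2, hg1]
  simp only [tt]
  rw [hP, f1, f2, f3, f4, f5, hp', hq'']
  have hf1 : ((2*j+1).factorial : ℚ) ≠ 0 := by exact_mod_cast (2*j+1).factorial_ne_zero
  have hf2 : ((j.factorial : ℚ)) ≠ 0 := by exact_mod_cast j.factorial_ne_zero
  have hj1 : ((j : ℚ) + 1) ≠ 0 := by positivity
  have hj2 : ((j : ℚ) + 2) ≠ 0 := by positivity
  field_simp
  ring

lemma point_zero (a b : ℕ) :
    (2*(a:ℚ)+3) * tt (a+1) b 0
      = (2*(a:ℚ)+2*(b:ℚ)+3) * tt a b 0 + (gg a b 1 - gg a b 0) := by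
  have hg1 : gg a b 1 = -((a.choose 0 : ℚ) * (b.choose 1 : ℚ) * (((1).factorial : ℚ))^2 * 4^(1)
        / ((2*1).factorial : ℚ)) := rfl
  have hg0 : gg a b 0 = 0 := rfl
  rw [hg1, hg0]
  simp only [tt]
  norm_num [Nat.factorial]
  ring

lemma point (a b j : ℕ) :
    (2*(a:ℚ)+3) * tt (a+1) b j
      = (2*(a:ℚ)+2*(b:ℚ)+3) * tt a b j + (gg a b (j+1) - gg a b j) := by
  cases j with
  | zero => exact point_zero a b
  | succ j => exact point_succ a b j

lemma key (a b : ℕ) :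
    ∑ j ∈ Finset.range (a+b+1), tt a b j
      = (a.factorial : ℚ) * (b.factorial : ℚ) * ((2*a+2*b+1).factorial : ℚ)
        / (((a+b).factorial : ℚ) * ((2*a+1).factorial : ℚ) * ((2*b+1).factorial : ℚ)) := by
  induction a with
  | zero =>
    rw [Finset.sum_eq_single 0]
    · simp [tt, Nat.factorial]
      have h1 : ((b.factorial : ℚ)) ≠ 0 := by exact_mod_cast b.factorial_ne_zero
      have h2 : (((2*b+1).factorial : ℚ)) ≠ 0 := by exact_mod_cast (2*b+1).factorial_ne_zero
      field_simp
    · intro j _ hj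
      have : 0 < j := Nat.pos_of_ne_zero hj
      simp [tt, Nat.choose_eq_zero_of_lt this]
    · intro h; simp at h
  | succ a ih =>
    have hsum : ∑ j ∈ Finset.range (a+b+2), ((2*(a:ℚ)+3) * tt (a+1) b j)
        = ∑ j ∈ Finset.range (a+b+2),
            ((2*(a:ℚ)+2*(b:ℚ)+3) * tt a b j + (gg a b (j+1) - gg a b j)) :=
      Finset.sum_congr rfl (fun j _ => point a b j)
    rw [Finset.sum_add_distrib, Finset.sum_range_sub (gg a b), ← Finset.mul_sum,
      ← Finset.mul_sum] at hsum
    have hg0 : gg a b 0 = 0 := rfl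
    have hgtop : gg a b (a+b+2) = 0 := by
      show gg a b ((a+b+1)+1) = 0
      simp [gg, Nat.choose_eq_zero_of_lt (show a < a+b+1 by omega)]
    have htop : tt a b (a+b+1) = 0 := by
      simp [tt, Nat.choose_eq_zero_of_lt (show a < a+b+1 by omega)]
    have hsplit : (∑ j ∈ Finset.range (a+b+2), tt a b j)
        = (∑ j ∈ Finset.range (a+b+1), tt a b j) + tt a b (a+b+1) :=
      Finset.sum_range_succ _ _
    rw [hg0, hgtop, hsplit, htop, add_zero, sub_zero, add_zero, ih] at hsum
    have hrange : a + 1 + b + 1 = a + b + 2 := by omega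
    have h23 : (2*(a:ℚ)+3) ≠ 0 := by positivity
    have hS : ∑ j ∈ Finset.range (a+1+b+1), tt (a+1) b j
        = (2*(a:ℚ)+2*(b:ℚ)+3) / (2*(a:ℚ)+3)
          * ((a.factorial : ℚ) * (b.factorial : ℚ) * ((2*a+2*b+1).factorial : ℚ)
            / (((a+b).factorial : ℚ) * ((2*a+1).factorial : ℚ) * ((2*b+1).factorial : ℚ))) := by
      rw [hrange]
      rw [div_mul_eq_mul_div, eq_div_iff h23]
      linear_combination hsum
    rw [hS]
    have e1 : (((a+1).factorial : ℕ) : ℚ) = ((a:ℚ)+1) * (a.factorial : ℚ) := by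
      rw [Nat.factorial_succ]; push_cast; ring
    have e2 : (((2*(a+1)+1).factorial : ℕ) : ℚ)
        = (2*(a:ℚ)+3) * ((2*(a:ℚ)+2) * ((2*a+1).factorial : ℚ)) := by
      have e : 2*(a+1)+1 = ((2*a+1)+1)+1 := by ring
      rw [e, Nat.factorial_succ, Nat.factorial_succ]; push_cast; ring
    have e3 : (((a+1+b).factorial : ℕ) : ℚ) = ((a:ℚ)+(b:ℚ)+1) * ((a+b).factorial : ℚ) := by
      have e : a+1+b = (a+b)+1 := by ring
      rw [e, Nat.factorial_succ]; push_cast; ring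
    have e4 : (((2*(a+1)+2*b+1).factorial : ℕ) : ℚ)
        = (2*(a:ℚ)+2*(b:ℚ)+3) * ((2*(a:ℚ)+2*(b:ℚ)+2) * ((2*a+2*b+1).factorial : ℚ)) := by
      have e : 2*(a+1)+2*b+1 = ((2*a+2*b+1)+1)+1 := by ring
      rw [e, Nat.factorial_succ, Nat.factorial_succ]; push_cast; ring
    rw [e1, e2, e3, e4]
    have hf1 : ((a.factorial : ℚ)) ≠ 0 := by exact_mod_cast a.factorial_ne_zero
    have hf2 : ((b.factorial : ℚ)) ≠ 0 := by exact_mod_cast b.factorial_ne_zero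
    have hf3 : (((a+b).factorial : ℚ)) ≠ 0 := by exact_mod_cast (a+b).factorial_ne_zero
    have hf4 : (((2*a+1).factorial : ℚ)) ≠ 0 := by exact_mod_cast (2*a+1).factorial_ne_zero
    have hf5 : (((2*b+1).factorial : ℚ)) ≠ 0 := by exact_mod_cast (2*b+1).factorial_ne_zero
    have hf6 : (((2*a+2*b+1).factorial : ℚ)) ≠ 0 := by
      exact_mod_cast (2*a+2*b+1).factorial_ne_zero
    field_simp

lemma asc_neg_nat (n : ℕ) : ∀ j : ℕ, j ≤ n →
    (ascPochhammer ℚ j).eval (-(n:ℚ)) = (-1)^j * (n.choose j : ℚ) * (j.factorial : ℚ) := by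
  intro j
  induction j with
  | zero => intro _; simp [ascPochhammer_zero]
  | succ j ih =>
    intro hj
    have hj' : j ≤ n := Nat.le_of_succ_le hj
    rw [ascPochhammer_succ_eval, ih hj']
    have h := choose_cast_succ n j
    have f1 : (((j+1).factorial : ℕ) : ℚ) = ((j:ℚ)+1) * (j.factorial : ℚ) := by
      rw [Nat.factorial_succ]; push_cast; ring
    rw [f1]
    push_cast
    linear_combination ((-1:ℚ)^j * (j.factorial : ℚ)) * h
lemma asc_three_half (j : ℕ) :
    (ascPochhammer ℚ j).eval (3/2 : ℚ) = ((2*j+1).factorial : ℚ) / (4^j * (j.factorial : ℚ)) := by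
  induction j with
  | zero => simp [ascPochhammer_zero, Nat.factorial]
  | succ j ih =>
    rw [ascPochhammer_succ_eval, ih]
    have f1 : (((j+1).factorial : ℕ) : ℚ) = ((j:ℚ)+1) * (j.factorial : ℚ) := by
      rw [Nat.factorial_succ]; push_cast; ring
    have f3 : (((2*(j+1)+1).factorial : ℕ) : ℚ)
        = (2*(j:ℚ)+3) * ((2*(j:ℚ)+2) * ((2*j+1).factorial : ℚ)) := by
      have e : 2*(j+1)+1 = ((2*j+1)+1)+1 := by ring
      rw [e, Nat.factorial_succ, Nat.factorial_succ]; push_cast; ring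
    rw [f1, f3]
    have hf1 : ((j.factorial : ℚ)) ≠ 0 := by exact_mod_cast j.factorial_ne_zero
    have hf2 : (((2*j+1).factorial : ℚ)) ≠ 0 := by exact_mod_cast (2*j+1).factorial_ne_zero
    have h4 : (4:ℚ)^j ≠ 0 := by positivity
    have hj1 : ((j:ℚ)+1) ≠ 0 := by positivity
    push_cast
    field_simp
    ring

theorem gauss_hypergeometric_value (m l : ℕ) (hlm : l ≤ m) :
    ∑ j ∈ Finset.range (min l (m - l) + 1),
      ((ascPochhammer ℚ j).eval (-(l : ℚ)) * (ascPochhammer ℚ j).eval (-((m : ℚ) - (l : ℚ)))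
        / (ascPochhammer ℚ j).eval (3 / 2)) * (1 / (j.factorial : ℚ))
      = (1 / (m.choose l : ℚ)) * ((2 * m + 1).factorial : ℚ) /
          (((2 * l + 1).factorial : ℚ) * ((2 * m - 2 * l + 1).factorial : ℚ)) := by
  set b := m - l with hb
  have hmb : l + b = m := by omega
  have hterm : ∀ j ∈ Finset.range (min l b + 1),
      ((ascPochhammer ℚ j).eval (-(l : ℚ)) * (ascPochhammer ℚ j).eval (-((m : ℚ) - (l : ℚ)))
        / (ascPochhammer ℚ j).eval (3 / 2)) * (1 / (j.factorial : ℚ)) = tt l b j := by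
    intro j hj
    simp only [Finset.mem_range] at hj
    have hjl : j ≤ l := by omega
    have hjb : j ≤ b := by omega
    have hcast : -((m : ℚ) - (l : ℚ)) = -((b : ℕ) : ℚ) := by
      rw [hb]; push_cast [Nat.cast_sub hlm]; ring
    rw [hcast, asc_neg_nat l j hjl, asc_neg_nat b j hjb, asc_three_half]
    have hf1 : ((j.factorial : ℚ)) ≠ 0 := by exact_mod_cast j.factorial_ne_zero
    have hf2 : (((2*j+1).factorial : ℚ)) ≠ 0 := by exact_mod_cast (2*j+1).factorial_ne_zero
    have h4 : (4:ℚ)^j ≠ 0 := by positivity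
    have hneg : ((-1:ℚ))^j * ((-1:ℚ))^j = 1 := by
      rw [← pow_add]
      have e : j + j = 2*j := by ring
      rw [e, pow_mul]
      norm_num
    simp only [tt]
    field_simp
    linear_combination ((l.choose j : ℚ) * (b.choose j : ℚ)) * hneg
  rw [Finset.sum_congr rfl hterm]
  have hext : ∑ j ∈ Finset.range (min l b + 1), tt l b j
      = ∑ j ∈ Finset.range (l + b + 1), tt l b j := by
    apply Finset.sum_subset
    · apply Finset.range_subset_range.mpr; omega
    · intro j _ hj
      simp only [Finset.mem_range] at hj
      have : l < j ∨ b < j := by omega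
      rcases this with h | h
      · simp [tt, Nat.choose_eq_zero_of_lt h]
      · simp [tt, Nat.choose_eq_zero_of_lt h]
  rw [hext, key l b]
  have e1 : 2*l + 2*b + 1 = 2*m + 1 := by omega
  have e2 : 2*b + 1 = 2*m - 2*l + 1 := by omega
  have e3 : l + b = m := hmb
  rw [e1, e2, e3]
  have hch : (m.choose l : ℚ) * (l.factorial : ℚ) * (b.factorial : ℚ) = (m.factorial : ℚ) := by
    exact_mod_cast congrArg (Nat.cast (R := ℚ)) (Nat.choose_mul_factorial_mul_factorial hlm)
  have hc0 : (m.choose l : ℚ) ≠ 0 := by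
    have := Nat.choose_pos hlm
    positivity
  have hf1 : ((l.factorial : ℚ)) ≠ 0 := by exact_mod_cast l.factorial_ne_zero
  have hf2 : ((b.factorial : ℚ)) ≠ 0 := by exact_mod_cast b.factorial_ne_zero
  have hf3 : ((m.factorial : ℚ)) ≠ 0 := by exact_mod_cast m.factorial_ne_zero
  have hf4 : (((2*l+1).factorial : ℚ)) ≠ 0 := by exact_mod_cast (2*l+1).factorial_ne_zero
  have hf5 : (((2*m-2*l+1).factorial : ℚ)) ≠ 0 := by
    exact_mod_cast (2*m-2*l+1).factorial_ne_zero
  field_simp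
  linear_combination hch
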